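/- Every graph with no dominating K_4-model is 2-degenerate, and hence has chromatic number at most 3. -/

import Mathlib

/-- A *dominating K_t-model* in a graph G is a sequence (T 0, ..., T (t-1)) of pairwise
disjoint non-empty connected subgraphs of G such that for all i < j, every vertex of T j
has a neighbour (in G) in T i. -/
def SimpleGraph.IsDomKtModel {V : Type*} (G : SimpleGraph V) (t : ℕ) (T : Fin t → Set V) : Prop :=
  (∀ i, (T i).Nonempty) ∧
  (Pairwise fun i j => Disjoint (T i) (T j)) ∧
  (∀ i, (G.induce (T i)).Connected) ∧
  (∀ i j : Fin t, i < j → ∀ v ∈ T j, ∃ u ∈ T i, G.Adj v u)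

/-- G contains a dominating K_t-model. -/
def SimpleGraph.HasDomKtModel {V : Type*} (G : SimpleGraph V) (t : ℕ) : Prop :=
  ∃ T : Fin t → Set V, G.IsDomKtModel t T

open scoped Classical

namespace DomK4

variable {V : Type*} [Fintype V] (G : SimpleGraph V)

set_option linter.unusedSectionVars false

/-- neighbours of `x` inside `A` -/
noncomputable def nb (A : Finset V) (x : V) : Finset V := A.filter (fun y => G.Adj x y)

/-- degree of `x` into `A` -/
noncomputable def dg (A : Finset V) (x : V) : ℕ := (nb G A x).card

/-- sum of degrees within `A` -/
noncomputable def DS (A : Finset V) : ℕ := ∑ x ∈ A, dg G A x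

/-- adjacency relation restricted to `A` -/
def Rl (A : Finset V) : V → V → Prop := fun x y => x ∈ A ∧ y ∈ A ∧ G.Adj x y

/-- connectivity (all pairs joined inside `A`) -/
def Cn (A : Finset V) : Prop := ∀ x ∈ A, ∀ y ∈ A, Relation.ReflTransGen (Rl G A) x y

/-- component of `a` inside `A` -/
noncomputable def cp (A : Finset V) (a : V) : Finset V :=
  A.filter (fun y => Relation.ReflTransGen (Rl G A) a y)

variable {G}

lemma mem_nb {A : Finset V} {x y : V} : y ∈ nb G A x ↔ y ∈ A ∧ G.Adj x y := by
  simp [nb]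

lemma nb_subset {A : Finset V} {x : V} : nb G A x ⊆ A := Finset.filter_subset _ _

lemma nb_mono {A B : Finset V} (h : A ⊆ B) (x : V) : nb G A x ⊆ nb G B x := by
  intro y hy; rw [mem_nb] at *; exact ⟨h hy.1, hy.2⟩

lemma self_not_mem_nb {A : Finset V} {x : V} : x ∉ nb G A x := by
  simp [mem_nb]

lemma rl_symm {A : Finset V} : Symmetric (Rl G A) := by
  intro x y ⟨hx, hy, hadj⟩; exact ⟨hy, hx, hadj.symm⟩

lemma rtg_symm {A : Finset V} {x y : V} (h : Relation.ReflTransGen (Rl G A) x y) :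
    Relation.ReflTransGen (Rl G A) y x := by
  induction h with
  | refl => exact .refl
  | tail _ hstep ih => exact Relation.ReflTransGen.trans (.single (rl_symm hstep)) ih

lemma rtg_mono {A B : Finset V} (h : A ⊆ B) {x y : V}
    (hr : Relation.ReflTransGen (Rl G A) x y) : Relation.ReflTransGen (Rl G B) x y := by
  refine Relation.ReflTransGen.mono ?_ x y hr
  intro a b ⟨ha, hb, hadj⟩; exact ⟨h ha, h hb, hadj⟩

lemma nb_erase_self {A : Finset V} {x : V} : nb G (A.erase x) x = nb G A x := by
  ext y; simp only [mem_nb, Finset.mem_erase]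
  constructor
  · rintro ⟨⟨_, h⟩, hadj⟩; exact ⟨h, hadj⟩
  · rintro ⟨h, hadj⟩; exact ⟨⟨fun he => G.irrefl (he ▸ hadj), h⟩, hadj⟩

lemma nb_erase {A : Finset V} {x v : V} : nb G (A.erase v) x = (nb G A x).erase v := by
  simp [nb, Finset.filter_erase]

lemma dg_eq_erase_add {A : Finset V} {x v : V} :
    dg G A x = dg G (A.erase v) x + (if v ∈ nb G A x then 1 else 0) := by
  rw [dg, dg, nb_erase]
  by_cases h : v ∈ nb G A x
  · rw [if_pos h, Finset.card_erase_of_mem h]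
    have : 1 ≤ (nb G A x).card := Finset.card_pos.mpr ⟨v, h⟩
    omega
  · rw [if_neg h, Finset.erase_eq_of_notMem h]
    omega

lemma DS_erase {A : Finset V} {v : V} (hv : v ∈ A) :
    DS G A = DS G (A.erase v) + 2 * dg G A v := by
  have h1 : DS G A = dg G A v + ∑ x ∈ A.erase v, dg G A x := by
    rw [DS, ← Finset.add_sum_erase _ _ hv]
  have h2 : ∀ x ∈ A.erase v, dg G A x = dg G (A.erase v) x + (if v ∈ nb G A x then 1 else 0) :=
    fun x _ => dg_eq_erase_add
  rw [h1, Finset.sum_congr rfl h2, Finset.sum_add_distrib]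
  have h3 : ∑ x ∈ A.erase v, (if v ∈ nb G A x then 1 else 0) = dg G (A.erase v) v := by
    rw [dg, nb]
    rw [Finset.sum_ite, Finset.sum_const, Finset.sum_const]
    simp only [smul_eq_mul, mul_one, mul_zero, add_zero]
    congr 1
    ext x
    simp only [Finset.mem_filter, mem_nb]
    constructor
    · rintro ⟨hx, hv', hadj⟩; exact ⟨hx, hadj.symm⟩
    · rintro ⟨hx, hadj⟩; exact ⟨hx, hv, hadj.symm⟩
  rw [h3]
  have h4 : dg G (A.erase v) v = dg G A v := by rw [dg, dg, nb_erase_self]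
  rw [h4, DS]
  ring

/-- first step out of `x` -/
lemma exists_nbr_of_rtg {A : Finset V} {x y : V} (h : Relation.ReflTransGen (Rl G A) x y)
    (hne : x ≠ y) : ∃ c, c ∈ nb G A x := by
  rcases h.cases_head with h | ⟨c, ⟨_, hc, hadj⟩, _⟩
  · exact absurd h hne
  · exact ⟨c, mem_nb.mpr ⟨hc, hadj⟩⟩

/-- removing a vertex of degree ≤ 1 preserves connectivity -/
lemma leaf_conn {A : Finset V} (hc : Cn G A) {x : V} (hx : x ∈ A) (hd : dg G A x ≤ 1) :
    Cn G (A.erase x) := by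
  have key : ∀ a ∈ A.erase x, ∀ b, Relation.ReflTransGen (Rl G A) a b →
      (b ≠ x → Relation.ReflTransGen (Rl G (A.erase x)) a b) ∧
      (b = x → ∀ u ∈ nb G A x, Relation.ReflTransGen (Rl G (A.erase x)) a u) := by
    intro a ha b hab
    induction hab with
    | refl =>
      constructor
      · intro _; exact .refl
      · intro hax
        exact absurd hax (Finset.ne_of_mem_erase ha)
    | @tail c b hac hstep ih =>
      obtain ⟨hcA, hbA, hadj⟩ := hstep
      constructor
      · intro hbx
        by_cases hcx : c = x
        · subst hcx
          exact ih.2 rfl b (mem_nb.mpr ⟨hbA, hadj⟩)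
        · exact (ih.1 hcx).tail ⟨Finset.mem_erase.mpr ⟨hcx, hcA⟩,
            Finset.mem_erase.mpr ⟨hbx, hbA⟩, hadj⟩
      · intro hbx u hu
        have hcx : c ≠ x := by
          intro he
          exact G.irrefl (he ▸ hbx ▸ hadj)
        have hcnb : c ∈ nb G A x := mem_nb.mpr ⟨hcA, hbx ▸ hadj.symm⟩
        have huc : u = c := Finset.card_le_one.mp hd u hu c hcnb
        exact huc ▸ ih.1 hcx
  intro a ha b hb
  exact (key a ha b (hc a (Finset.mem_of_mem_erase ha) b (Finset.mem_of_mem_erase hb))).1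
    (Finset.ne_of_mem_erase hb)

/-- peelable sets satisfy the forest bound -/
lemma DS_le_of_peel {A : Finset V} (hp : ∀ W ⊆ A, W.Nonempty → ∃ x ∈ W, dg G W x ≤ 1)
    (hne : A.Nonempty) : DS G A + 2 ≤ 2 * A.card := by
  obtain ⟨n, hn⟩ : ∃ n, A.card = n := ⟨_, rfl⟩
  induction n using Nat.strong_induction_on generalizing A with
  | _ n ih =>
    obtain ⟨x, hx, hdx⟩ := hp A subset_rfl hne
    by_cases he : (A.erase x).Nonempty
    · have hsub : A.erase x ⊆ A := Finset.erase_subset _ _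
      have hcard : (A.erase x).card = A.card - 1 := Finset.card_erase_of_mem hx
      have hlt : (A.erase x).card < n := by
        rw [hcard, ← hn]
        have : 1 ≤ A.card := Finset.card_pos.mpr hne
        omega
      have ihe := ih _ hlt (fun W hW hWne => hp W (hW.trans hsub) hWne) he rfl
      have hDS : DS G A = DS G (A.erase x) + 2 * dg G A x := DS_erase hx
      have h1 : 1 ≤ A.card := Finset.card_pos.mpr hne
      omega
    · have : A = {x} := by
        apply Finset.eq_singleton_iff_unique_mem.mpr
        refine ⟨hx, fun y hy => ?_⟩
        by_contra hne'
        exact he ⟨y, Finset.mem_erase.mpr ⟨hne', hy⟩⟩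
      subst this
      have : dg G {x} x = 0 := by
        rw [dg, Finset.card_eq_zero]
        ext y
        simp only [mem_nb, Finset.mem_singleton, Finset.notMem_empty, iff_false, not_and]
        rintro rfl
        exact G.irrefl
      simp [DS, this]

/-- connected sets satisfy the tree lower bound -/
lemma le_DS_of_conn {A : Finset V} (hc : Cn G A) (hne : A.Nonempty) :
    2 * A.card ≤ DS G A + 2 := by
  obtain ⟨n, hn⟩ : ∃ n, A.card = n := ⟨_, rfl⟩
  induction n using Nat.strong_induction_on generalizing A with
  | _ n ih =>
    by_cases hall : ∀ x ∈ A, 2 ≤ dg G A x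
    · have h := Finset.card_nsmul_le_sum A (fun x => dg G A x) 2 hall
      simp only [smul_eq_mul] at h
      rw [DS]
      omega
    · push_neg at hall
      obtain ⟨x, hx, hdx⟩ := hall
      have hdx' : dg G A x ≤ 1 := by omega
      by_cases he : (A.erase x).Nonempty
      · obtain ⟨y, hy⟩ := he
        have hyx : y ≠ x := Finset.ne_of_mem_erase hy
        have hd1 : dg G A x = 1 := by
          obtain ⟨c, hc'⟩ := exists_nbr_of_rtg (hc x hx y (Finset.mem_of_mem_erase hy)) (Ne.symm hyx)
          have : 0 < dg G A x := Finset.card_pos.mpr ⟨c, hc'⟩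
          omega
        have hconn' : Cn G (A.erase x) := leaf_conn hc hx hdx'
        have hcard : (A.erase x).card = A.card - 1 := Finset.card_erase_of_mem hx
        have hlt : (A.erase x).card < n := by
          rw [hcard, ← hn]
          have : 1 ≤ A.card := Finset.card_pos.mpr hne
          omega
        have ihe := ih _ hlt hconn' ⟨y, hy⟩ rfl
        have hDS : DS G A = DS G (A.erase x) + 2 * dg G A x := DS_erase hx
        have h2 : 2 ≤ A.card := by
          have := Finset.card_pos.mpr (⟨y, hy⟩ : (A.erase x).Nonempty)
          omega
        omega
      · have : A = {x} := by
          apply Finset.eq_singleton_iff_unique_mem.mpr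
          refine ⟨hx, fun y hy => ?_⟩
          by_contra hne'
          exact he ⟨y, Finset.mem_erase.mpr ⟨hne', hy⟩⟩
        subst this
        simp

lemma DS_eq_of_conn_peel {A : Finset V} (hc : Cn G A) (hne : A.Nonempty)
    (hp : ∀ W ⊆ A, W.Nonempty → ∃ x ∈ W, dg G W x ≤ 1) : DS G A + 2 = 2 * A.card :=
  le_antisymm (DS_le_of_peel hp hne) (le_DS_of_conn hc hne)

/-! ### components -/

lemma mem_cp {A : Finset V} {a y : V} :
    y ∈ cp G A a ↔ y ∈ A ∧ Relation.ReflTransGen (Rl G A) a y := by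
  simp [cp]

lemma cp_subset {A : Finset V} {a : V} : cp G A a ⊆ A := Finset.filter_subset _ _

lemma cp_self {A : Finset V} {a : V} (ha : a ∈ A) : a ∈ cp G A a :=
  mem_cp.mpr ⟨ha, .refl⟩

lemma cp_closed {A : Finset V} {a y z : V} (hy : y ∈ cp G A a) (hz : z ∈ A)
    (hadj : G.Adj y z) : z ∈ cp G A a := by
  obtain ⟨hyA, hr⟩ := mem_cp.mp hy
  exact mem_cp.mpr ⟨hz, hr.tail ⟨hyA, hz, hadj⟩⟩

lemma cp_rtg_within {A : Finset V} {a y : V} (ha : a ∈ A)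
    (h : Relation.ReflTransGen (Rl G A) a y) :
    Relation.ReflTransGen (Rl G (cp G A a)) a y := by
  induction h with
  | refl => exact .refl
  | @tail c b hac hstep ih =>
    obtain ⟨hcA, hbA, hadj⟩ := hstep
    exact ih.tail ⟨mem_cp.mpr ⟨hcA, hac⟩, mem_cp.mpr ⟨hbA, hac.tail ⟨hcA, hbA, hadj⟩⟩, hadj⟩

lemma cp_conn {A : Finset V} {a : V} (ha : a ∈ A) : Cn G (cp G A a) := by
  intro x hx y hy
  obtain ⟨hxA, hrx⟩ := mem_cp.mp hx
  obtain ⟨hyA, hry⟩ := mem_cp.mp hy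
  exact (rtg_symm (cp_rtg_within ha hrx)).trans (cp_rtg_within ha hry)

lemma cp_absorb {A C : Finset V} {a y : V} (hconn : Cn G C) (hCA : C ⊆ A)
    (hy : y ∈ C) (hycp : y ∈ cp G A a) : C ⊆ cp G A a := by
  intro z hz
  obtain ⟨hyA, hry⟩ := mem_cp.mp hycp
  exact mem_cp.mpr ⟨hCA hz, hry.trans (rtg_mono hCA (hconn y hy z hz))⟩

lemma cp_eq_of_mem {A : Finset V} {a y : V} (hy : y ∈ cp G A a) :
    cp G A y = cp G A a := by
  obtain ⟨hyA, hr⟩ := mem_cp.mp hy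
  ext z
  simp only [mem_cp]
  exact ⟨fun ⟨hz, h⟩ => ⟨hz, hr.trans h⟩, fun ⟨hz, h⟩ => ⟨hz, (rtg_symm hr).trans h⟩⟩

lemma no_cross {A : Finset V} {a x y : V} (hx : x ∈ cp G A a) (hy : y ∈ A)
    (hyn : y ∉ cp G A a) : ¬ G.Adj x y := fun hadj => hyn (cp_closed hx hy hadj)

/-- if `K ⊆ A` is closed under neighbourhoods, degree sums split -/
lemma DS_split {A K : Finset V} (hKA : K ⊆ A) (hcl : ∀ x ∈ K, nb G A x ⊆ K) :
    DS G A = DS G K + DS G (A \ K) := by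
  have h1 : ∀ x ∈ K, dg G A x = dg G K x := by
    intro x hx
    rw [dg, dg]
    congr 1
    apply Finset.Subset.antisymm
    · intro y hy
      exact mem_nb.mpr ⟨hcl x hx hy, (mem_nb.mp hy).2⟩
    · exact nb_mono hKA x
  have h2 : ∀ x ∈ A \ K, dg G A x = dg G (A \ K) x := by
    intro x hx
    obtain ⟨hxA, hxK⟩ := Finset.mem_sdiff.mp hx
    rw [dg, dg]
    congr 1
    apply Finset.Subset.antisymm
    · intro y hy
      obtain ⟨hyA, hadj⟩ := mem_nb.mp hy
      refine mem_nb.mpr ⟨Finset.mem_sdiff.mpr ⟨hyA, fun hyK => ?_⟩, hadj⟩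
      exact hxK (hcl y hyK (mem_nb.mpr ⟨hxA, hadj.symm⟩))
    · exact nb_mono (Finset.sdiff_subset) x
  rw [DS, ← Finset.sum_sdiff hKA]
  rw [Finset.sum_congr rfl h2, Finset.sum_congr rfl h1]
  rw [DS, DS]
  ring

/-- a connected set with a proper nonempty subset has a crossing edge -/
lemma crossing {A B₀ : Finset V} (hc : Cn G A) (hBA : B₀ ⊆ A) (hne : B₀.Nonempty)
    (hproper : (A \ B₀).Nonempty) : ∃ x ∈ B₀, ∃ y ∈ A, y ∉ B₀ ∧ G.Adj x y := by
  obtain ⟨b, hb⟩ := hne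
  obtain ⟨t, ht⟩ := hproper
  obtain ⟨htA, htB⟩ := Finset.mem_sdiff.mp ht
  have h := hc b (hBA hb) t htA
  have key : ∀ u, Relation.ReflTransGen (Rl G A) b u →
      u ∈ B₀ ∨ ∃ x ∈ B₀, ∃ y ∈ A, y ∉ B₀ ∧ G.Adj x y := by
    intro u hu
    induction hu with
    | refl => exact Or.inl hb
    | @tail c u hbc hstep ih =>
      obtain ⟨hcA, huA, hadj⟩ := hstep
      rcases ih with hcB | hdone
      · by_cases huB : u ∈ B₀
        · exact Or.inl huB
        · exact Or.inr ⟨c, hcB, u, huA, huB, hadj⟩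
      · exact Or.inr hdone
  rcases key t h with htB' | hdone
  · exact absurd htB' htB
  · exact hdone

/-- existence of a card-minimal subset satisfying a predicate -/
lemma exists_min_subset (A : Finset V) (pred : Finset V → Prop) (hA : pred A) :
    ∃ W ⊆ A, pred W ∧ ∀ W' ⊆ W, pred W' → W' = W := by
  obtain ⟨W, hW, hmin⟩ := Finset.exists_min_image (A.powerset.filter pred) Finset.card
    ⟨A, Finset.mem_filter.mpr ⟨Finset.mem_powerset_self A, hA⟩⟩
  obtain ⟨hWp, hWpred⟩ := Finset.mem_filter.mp hW
  have hWA := Finset.mem_powerset.mp hWp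
  refine ⟨W, hWA, hWpred, fun W' hW'W hW'pred => ?_⟩
  have : W.card ≤ W'.card := hmin W' (Finset.mem_filter.mpr
    ⟨Finset.mem_powerset.mpr (hW'W.trans hWA), hW'pred⟩)
  exact Finset.eq_of_subset_of_card_le hW'W this

/-! ### cyclic sets -/

def Cyclic (G : SimpleGraph V) (A : Finset V) : Prop := A.Nonempty ∧ ∀ x ∈ A, 2 ≤ dg G A x

def IsCyc (G : SimpleGraph V) (Z : Finset V) : Prop := Cyclic G Z ∧ ∀ W ⊆ Z, Cyclic G W → W = Z

lemma exists_isCyc_subset {A : Finset V} (h : Cyclic G A) :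
    ∃ Z ⊆ A, IsCyc G Z := by
  obtain ⟨Z, hZA, hZc, hZmin⟩ := exists_min_subset A (Cyclic G) h
  refine ⟨Z, hZA, hZc, fun W hWZ hWc => hZmin W hWZ hWc⟩

/-- in a minimal cyclic set, every proper nonempty subset has a vertex of degree ≤ 1 -/
lemma isCyc_peel {Z : Finset V} (h : IsCyc G Z) {W : Finset V} (hWZ : W ⊆ Z) (hne : W ≠ Z) :
    W.Nonempty → ∃ x ∈ W, dg G W x ≤ 1 := by
  intro hWne
  by_contra hcon
  push_neg at hcon
  exact hne (h.2 W hWZ ⟨hWne, fun x hx => by have := hcon x hx; omega⟩)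

/-- minimal cyclic sets are 2-regular -/
lemma isCyc_two_regular {Z : Finset V} (h : IsCyc G Z) : ∀ z ∈ Z, dg G Z z = 2 := by
  by_contra hcon
  push_neg at hcon
  obtain ⟨z₀, hz₀, hz₀d⟩ := hcon
  have hz₀3 : 3 ≤ dg G Z z₀ := by
    have := h.1.2 z₀ hz₀
    omega
  -- take a vertex of minimum degree
  obtain ⟨n₁, hn₁, hn₁min⟩ := Finset.exists_min_image Z (dg G Z) h.1.1
  have hn₁2 : 2 ≤ dg G Z n₁ := h.1.2 n₁ hn₁
  -- the erase is nonempty (z₀ has 3 nbrs in Z, all ≠ z₀, so card Z ≥ 4)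
  have hcard : 4 ≤ Z.card := by
    have hsub : insert z₀ (nb G Z z₀) ⊆ Z := by
      intro y hy
      rcases Finset.mem_insert.mp hy with rfl | hy
      · exact hz₀
      · exact nb_subset hy
    have : (insert z₀ (nb G Z z₀)).card = dg G Z z₀ + 1 := by
      rw [Finset.card_insert_of_notMem self_not_mem_nb, dg]
    have := Finset.card_le_card hsub
    omega
  have herasene : (Z.erase n₁).Nonempty := by
    rw [← Finset.card_pos, Finset.card_erase_of_mem hn₁]
    omega
  -- peel bound on Z.erase n₁
  have hpeel : DS G (Z.erase n₁) + 2 ≤ 2 * (Z.erase n₁).card := by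
    apply DS_le_of_peel _ herasene
    intro W hW hWne
    apply isCyc_peel h (hW.trans (Finset.erase_subset _ _)) _ hWne
    intro hWZ
    have : n₁ ∈ W := hWZ ▸ hn₁
    exact Finset.notMem_erase n₁ Z (hW this)
  have hDSerase : DS G Z = DS G (Z.erase n₁) + 2 * dg G Z n₁ := DS_erase hn₁
  have hcarde : (Z.erase n₁).card = Z.card - 1 := Finset.card_erase_of_mem hn₁
  -- case on min degree
  by_cases hmin2 : dg G Z n₁ = 2
  · -- lower bound : all ≥ 2, z₀ ≥ 3 strict
    have hlow : 2 * Z.card < DS G Z := by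
      rw [DS]
      calc 2 * Z.card = ∑ _x ∈ Z, 2 := by rw [Finset.sum_const, smul_eq_mul, mul_comm]
      _ < ∑ x ∈ Z, dg G Z x := by
          apply Finset.sum_lt_sum (fun i hi => h.1.2 i hi) ⟨z₀, hz₀, by omega⟩
    omega
  · have hmin3 : 3 ≤ dg G Z n₁ := by omega
    have hlowm := Finset.card_nsmul_le_sum Z (fun x => dg G Z x) (dg G Z n₁)
      (fun i hi => hn₁min i hi)
    simp only [smul_eq_mul] at hlowm
    rw [← DS] at hlowm
    have hsplit : (Z.card - 2) * 3 + 2 * dg G Z n₁ ≤ Z.card * dg G Z n₁ := by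
      have h1 : (Z.card - 2) * 3 ≤ (Z.card - 2) * dg G Z n₁ := Nat.mul_le_mul_left _ hmin3
      have h2 : (Z.card - 2) * dg G Z n₁ + 2 * dg G Z n₁ = Z.card * dg G Z n₁ := by
        rw [← Nat.add_mul]
        congr 1
        omega
      omega
    have hfin : (Z.card - 2) * 3 + 2 * dg G Z n₁ ≤ DS G Z := le_trans hsplit hlowm
    omega

/-- minimal cyclic sets are connected -/
lemma isCyc_conn {Z : Finset V} (h : IsCyc G Z) : Cn G Z := by
  obtain ⟨a, ha⟩ := h.1.1
  have : cp G Z a = Z := by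
    apply h.2 _ cp_subset
    constructor
    · exact ⟨a, cp_self ha⟩
    · intro x hx
      have : nb G Z x ⊆ nb G (cp G Z a) x := by
        intro y hy
        obtain ⟨hyZ, hadj⟩ := mem_nb.mp hy
        exact mem_nb.mpr ⟨cp_closed hx hyZ hadj, hadj⟩
      have hle := Finset.card_le_card this
      have := h.1.2 x (cp_subset hx)
      rw [dg] at *
      omega
  intro x hx y hy
  rw [← this] at hx hy
  obtain ⟨_, hrx⟩ := mem_cp.mp hx
  obtain ⟨_, hry⟩ := mem_cp.mp hy
  exact (rtg_symm hrx).trans hry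

/-- bridge to mathlib's induced-subgraph connectivity -/
lemma conn_induce {A : Finset V} (hc : Cn G A) (hne : A.Nonempty) :
    (G.induce (A : Set V)).Connected := by
  rw [SimpleGraph.connected_iff]
  constructor
  · have main : ∀ (x : V) (hx : x ∈ (A : Set V)) (y : V), Relation.ReflTransGen (Rl G A) x y →
        ∀ (hy : y ∈ (A : Set V)), (G.induce (A : Set V)).Reachable ⟨x, hx⟩ ⟨y, hy⟩ := by
      intro x hx y h
      induction h with
      | refl => intro hy; exact SimpleGraph.Reachable.refl _
      | @tail c b hac hstep ih =>
        intro hy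
        obtain ⟨hcA, hbA, hadj⟩ := hstep
        refine (ih (by simpa using hcA)).trans (SimpleGraph.Adj.reachable ?_)
        exact hadj
    rintro ⟨x, hx⟩ ⟨y, hy⟩
    have hx' : x ∈ A := by simpa using hx
    have hy' : y ∈ A := by simpa using hy
    exact main x hx y (hc x hx' y hy') hy
  · obtain ⟨a, ha⟩ := hne
    exact ⟨⟨a, by simpa using ha⟩⟩

lemma conn_singleton (z : V) : Cn G ({z} : Finset V) := by
  intro x hx y hy
  rw [Finset.mem_singleton] at hx hy
  subst hx; subst hy
  exact .refl

/-- greedy colouring from 2-degeneracy -/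
lemma colorable_of_low (hlow : ∀ s : Set V, s.Nonempty → ∃ v ∈ s, {u ∈ s | G.Adj v u}.ncard ≤ 2) :
    G.Colorable 3 := by
  have key : ∀ (A : Finset V), ∃ f : V → Fin 3, ∀ x ∈ A, ∀ y ∈ A, G.Adj x y → f x ≠ f y := by
    intro A
    obtain ⟨n, hn⟩ : ∃ n, A.card = n := ⟨_, rfl⟩
    induction n using Nat.strong_induction_on generalizing A with
    | _ n ih =>
      rcases Finset.eq_empty_or_nonempty A with rfl | hAne
      · exact ⟨fun _ => 0, by simp⟩
      · obtain ⟨v, hv, hvcard⟩ := hlow (A : Set V) (by exact_mod_cast hAne)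
        have hv' : v ∈ A := by simpa using hv
        have hcard2 : (nb G A v).card ≤ 2 := by
          have : {u ∈ (A : Set V) | G.Adj v u}.toFinset = nb G A v := by
            ext u
            simp [nb, mem_nb]
          rwa [Set.ncard_eq_toFinset_card', this] at hvcard
        have hlt : (A.erase v).card < n := by
          rw [Finset.card_erase_of_mem hv', ← hn]
          have : 1 ≤ A.card := Finset.card_pos.mpr hAne
          omega
        obtain ⟨f', hf'⟩ := ih _ hlt (A.erase v) rfl
        have himg : ((nb G A v).image f').card < 3 := by
          calc ((nb G A v).image f').card ≤ (nb G A v).card := Finset.card_image_le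
          _ ≤ 2 := hcard2
          _ < 3 := by omega
        have : ((Finset.univ : Finset (Fin 3)) \ (nb G A v).image f').Nonempty := by
          rw [← Finset.card_pos, Finset.card_sdiff_of_subset (Finset.subset_univ _)]
          have hcu : (Finset.univ : Finset (Fin 3)).card = 3 := by simp
          omega
        obtain ⟨c, hc⟩ := this
        have hcnot : c ∉ (nb G A v).image f' := (Finset.mem_sdiff.mp hc).2
        refine ⟨Function.update f' v c, ?_⟩
        intro x hx y hy hadj
        by_cases hxv : x = v
        · have hyv : y ≠ v := fun he => G.irrefl (by rwa [hxv, he] at hadj)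
          rw [hxv, Function.update_self, Function.update_of_ne hyv]
          intro he
          exact hcnot (Finset.mem_image.mpr ⟨y, mem_nb.mpr ⟨hy, by rwa [hxv] at hadj⟩, he.symm⟩)
        · by_cases hyv : y = v
          · rw [hyv, Function.update_self, Function.update_of_ne hxv]
            intro he
            refine hcnot (Finset.mem_image.mpr ⟨x, mem_nb.mpr ⟨hx, ?_⟩, he⟩)
            rw [← hyv]
            exact hadj.symm
          · rw [Function.update_of_ne hxv, Function.update_of_ne hyv]
            exact hf' x (Finset.mem_erase.mpr ⟨hxv, hx⟩) y (Finset.mem_erase.mpr ⟨hyv, hy⟩) hadj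
  obtain ⟨f, hf⟩ := key Finset.univ
  exact ⟨SimpleGraph.Coloring.mk f (fun {x y} hadj =>
    hf x (Finset.mem_univ x) y (Finset.mem_univ y) hadj)⟩

lemma dg_ge_two {W : Finset V} {x a b : V} (ha : a ∈ W) (hb : b ∈ W)
    (haa : G.Adj x a) (hab : G.Adj x b) (hne : a ≠ b) : 2 ≤ dg G W x := by
  have hsub : ({a, b} : Finset V) ⊆ nb G W x := by
    intro y hy
    rcases Finset.mem_insert.mp hy with rfl | hy
    · exact mem_nb.mpr ⟨ha, haa⟩
    · rw [Finset.mem_singleton] at hy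
      subst hy
      exact mem_nb.mpr ⟨hb, hab⟩
  have hc := Finset.card_le_card hsub
  rwa [Finset.card_pair hne] at hc

lemma card_subset_pair {t : Finset V} {a b : V} (hsub : t ⊆ {a, b}) (hne : a ≠ b) :
    t.card = (if a ∈ t then 1 else 0) + (if b ∈ t then 1 else 0) := by
  by_cases ha : a ∈ t <;> by_cases hb : b ∈ t
  · rw [if_pos ha, if_pos hb]
    have : t = {a, b} := Finset.Subset.antisymm hsub (Finset.insert_subset ha (by simpa using hb))
    rw [this, Finset.card_pair hne]
  · rw [if_pos ha, if_neg hb]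
    have : t = {a} := by
      apply Finset.Subset.antisymm _ (by simpa using ha)
      intro y hy
      rcases Finset.mem_insert.mp (hsub hy) with rfl | hy'
      · exact Finset.mem_singleton_self _
      · rw [Finset.mem_singleton] at hy'
        exact absurd (hy' ▸ hy) hb
    rw [this, Finset.card_singleton]
  · rw [if_neg ha, if_pos hb]
    have : t = {b} := by
      apply Finset.Subset.antisymm _ (by simpa using hb)
      intro y hy
      rcases Finset.mem_insert.mp (hsub hy) with rfl | hy'
      · exact absurd hy ha
      · rw [Finset.mem_singleton] at hy'
        exact hy' ▸ (Finset.mem_singleton_self _)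
    rw [this, Finset.card_singleton]
  · rw [if_neg ha, if_neg hb]
    rw [Finset.card_eq_zero]
    apply Finset.eq_empty_of_forall_notMem
    intro y hy
    rcases Finset.mem_insert.mp (hsub hy) with rfl | hy'
    · exact ha hy
    · rw [Finset.mem_singleton] at hy'
      exact hb (hy' ▸ hy)

lemma sum_ite_mem_card {A : Finset V} {p : V → Prop} :
    (∑ x ∈ A, if p x then 1 else 0) = (A.filter p).card := by
  rw [Finset.sum_ite, Finset.sum_const, Finset.sum_const]
  simp

theorem main_model {S₀ : Finset V} (hS₀ : S₀.Nonempty)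
    (hdeg₀ : ∀ x ∈ S₀, 3 ≤ dg G S₀ x) : G.HasDomKtModel 4 := by
  classical
  obtain ⟨v₀, hv₀⟩ := hS₀
  set S : Finset V := cp G S₀ v₀ with hSdef
  have hSne : S.Nonempty := ⟨v₀, cp_self hv₀⟩
  have hSconn : Cn G S := cp_conn hv₀
  have hSclosed : ∀ x ∈ S, nb G S₀ x ⊆ S := by
    intro x hx y hy
    obtain ⟨hyS₀, hadj⟩ := mem_nb.mp hy
    exact cp_closed hx hyS₀ hadj
  have hSsub : S ⊆ S₀ := cp_subset
  have hSdeg : ∀ x ∈ S, 3 ≤ dg G S x := by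
    intro x hx
    have : nb G S₀ x = nb G S x := by
      apply Finset.Subset.antisymm
      · intro y hy
        exact mem_nb.mpr ⟨hSclosed x hx hy, (mem_nb.mp hy).2⟩
      · exact nb_mono hSsub x
    have h3 := hdeg₀ x (hSsub hx)
    rwa [dg, this, ← dg] at h3
  -- the set of candidate pairs
  set Pr : Finset V × Finset V → Prop :=
    fun p => IsCyc G p.1 ∧ p.1 ⊆ S ∧ ∃ b ∈ S, b ∉ p.1 ∧ p.2 = cp G (S \ p.1) b with hPrdef
  set P : Finset (Finset V × Finset V) := Finset.univ.filter Pr with hPdef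
  -- existence of a pair
  have hPexists : P.Nonempty := by
    have hScyc : Cyclic G S := ⟨hSne, fun x hx => by have := hSdeg x hx; omega⟩
    obtain ⟨Z₀, hZ₀S, hZ₀⟩ := exists_isCyc_subset hScyc
    have hZ₀ne : Z₀ ≠ S := by
      intro he
      obtain ⟨z, hz⟩ := hZ₀.1.1
      have := isCyc_two_regular hZ₀ z hz
      have := hSdeg z (he ▸ hz)
      rw [he] at *
      omega
    have : ∃ b ∈ S, b ∉ Z₀ := by
      by_contra hcon
      push_neg at hcon
      exact hZ₀ne (Finset.Subset.antisymm hZ₀S hcon)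
    obtain ⟨b₀, hb₀S, hb₀Z⟩ := this
    exact ⟨(Z₀, cp G (S \ Z₀) b₀), Finset.mem_filter.mpr ⟨Finset.mem_univ _,
      hZ₀, hZ₀S, b₀, hb₀S, hb₀Z, rfl⟩⟩
  -- extremal choice
  obtain ⟨q, hqP, hqmax⟩ := Finset.exists_max_image P (fun p => p.2.card) hPexists
  set P2 : Finset (Finset V × Finset V) := P.filter (fun p => p.2.card = q.2.card) with hP2def
  have hP2ne : P2.Nonempty := ⟨q, Finset.mem_filter.mpr ⟨hqP, rfl⟩⟩
  obtain ⟨pz, hpzP2, hpzmin⟩ := Finset.exists_min_image P2 (fun p => p.1.card) hP2ne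
  obtain ⟨hpzP, hpzcard⟩ := Finset.mem_filter.mp hpzP2
  set Z : Finset V := pz.1 with hZdef
  set B : Finset V := pz.2 with hBdef
  obtain ⟨hZcyc, hZS, b₀, hb₀S, hb₀Z, hBeq⟩ := (Finset.mem_filter.mp hpzP).2
  rw [← hZdef] at hZcyc hZS hb₀Z
  rw [← hBdef, ← hZdef] at hBeq
  have hmaxB : ∀ p ∈ P, p.2.card ≤ B.card := by
    intro p hp
    rw [hBdef, hpzcard]
    exact hqmax p hp
  have hminZ : ∀ p ∈ P, p.2.card = B.card → Z.card ≤ p.1.card := by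
    intro p hp hcard
    exact hpzmin p (Finset.mem_filter.mpr ⟨hp, by rw [hcard, ← hpzcard]⟩)
  -- basic facts about B
  have hb₀SZ : b₀ ∈ S \ Z := Finset.mem_sdiff.mpr ⟨hb₀S, hb₀Z⟩
  have hBsub : B ⊆ S \ Z := hBeq ▸ cp_subset
  have hBconn : Cn G B := hBeq ▸ cp_conn hb₀SZ
  have hBne : B.Nonempty := ⟨b₀, hBeq ▸ cp_self hb₀SZ⟩
  have hb₀B : b₀ ∈ B := by rw [hBeq]; exact cp_self hb₀SZ
  have hBclosed : ∀ x ∈ B, ∀ y ∈ S \ Z, G.Adj x y → y ∈ B := by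
    intro x hx y hy hadj
    rw [hBeq] at hx ⊢
    exact cp_closed hx hy hadj
  have hreg : ∀ z ∈ Z, dg G Z z = 2 := isCyc_two_regular hZcyc
  have hZne : Z.Nonempty := hZcyc.1.1
  -- the two key maximality consequences
  have hMAX : ∀ W : Finset V, W ⊆ S → Cyclic G W → (∀ x ∈ W, x ∉ B) →
      ∀ s', s' ∈ S → s' ∉ W → s' ∉ B → (∃ b ∈ B, G.Adj s' b) → False := by
    intro W hWS hWcyc hWB s' hs'S hs'W hs'B hs'adj
    obtain ⟨Z'', hZ''W, hZ''⟩ := exists_isCyc_subset hWcyc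
    have hb₀Z'' : b₀ ∉ Z'' := fun hb => hWB b₀ (hZ''W hb) hb₀B
    have hpair : (Z'', cp G (S \ Z'') b₀) ∈ P := Finset.mem_filter.mpr ⟨Finset.mem_univ _,
      hZ'', hZ''W.trans hWS, b₀, hb₀S, hb₀Z'', rfl⟩
    set B'' : Finset V := cp G (S \ Z'') b₀ with hB''def
    have hBB'' : B ⊆ B'' := by
      have hsub : B ⊆ S \ Z'' := by
        intro x hx
        exact Finset.mem_sdiff.mpr ⟨(Finset.mem_sdiff.mp (hBsub hx)).1,
          fun hxZ => hWB x (hZ''W hxZ) hx⟩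
      exact cp_absorb hBconn hsub hb₀B (cp_self (Finset.mem_sdiff.mpr ⟨hb₀S, hb₀Z''⟩))
    have hs'B'' : s' ∈ B'' := by
      obtain ⟨b, hb, hadj⟩ := hs'adj
      exact cp_closed (hBB'' hb) (Finset.mem_sdiff.mpr ⟨hs'S, fun hs => hs'W (hZ''W hs)⟩) hadj.symm
    have hcard : B.card + 1 ≤ B''.card := by
      have : insert s' B ⊆ B'' := Finset.insert_subset hs'B'' hBB''
      have hc := Finset.card_le_card this
      rwa [Finset.card_insert_of_notMem hs'B] at hc
    have := hmaxB _ hpair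
    simp only at this
    omega
  have hMAX2 : ∀ W : Finset V, W ⊆ S → Cyclic G W → (∀ x ∈ W, x ∉ B) →
      W.card < Z.card → False := by
    intro W hWS hWcyc hWB hWcard
    obtain ⟨Z'', hZ''W, hZ''⟩ := exists_isCyc_subset hWcyc
    have hb₀Z'' : b₀ ∉ Z'' := fun hb => hWB b₀ (hZ''W hb) hb₀B
    have hpair : (Z'', cp G (S \ Z'') b₀) ∈ P := Finset.mem_filter.mpr ⟨Finset.mem_univ _,
      hZ'', hZ''W.trans hWS, b₀, hb₀S, hb₀Z'', rfl⟩
    set B'' : Finset V := cp G (S \ Z'') b₀ with hB''def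
    have hBB'' : B ⊆ B'' := by
      have hsub : B ⊆ S \ Z'' := by
        intro x hx
        exact Finset.mem_sdiff.mpr ⟨(Finset.mem_sdiff.mp (hBsub hx)).1,
          fun hxZ => hWB x (hZ''W hxZ) hx⟩
      exact cp_absorb hBconn hsub hb₀B (cp_self (Finset.mem_sdiff.mpr ⟨hb₀S, hb₀Z''⟩))
    have h1 := hmaxB _ hpair
    simp only at h1
    have h2 : B''.card = B.card := le_antisymm h1 (Finset.card_le_card hBB'')
    have h3 := hminZ _ hpair h2
    simp only at h3
    have := Finset.card_le_card hZ''W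
    omega
  -- basic separation facts
  have hBS : B ⊆ S := fun x hx => (Finset.mem_sdiff.mp (hBsub hx)).1
  have hZB : ∀ z ∈ Z, z ∉ B := fun z hz hzB => (Finset.mem_sdiff.mp (hBsub hzB)).2 hz
  have hSB : ∃ s ∈ Z, ∃ u ∈ B, G.Adj s u := by
    obtain ⟨z1, hz1⟩ := hZne
    have hproper : (S \ B).Nonempty := ⟨z1, Finset.mem_sdiff.mpr ⟨hZS hz1, hZB z1 hz1⟩⟩
    obtain ⟨x, hxB, y, hyS, hyB, hadj⟩ := crossing hSconn hBS hBne hproper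
    by_cases hyZ : y ∈ Z
    · exact ⟨y, hyZ, x, hxB, hadj.symm⟩
    · exact absurd (hBclosed x hxB y (Finset.mem_sdiff.mpr ⟨hyS, hyZ⟩) hadj) hyB
  -- the key domination claim: every vertex of Z has a neighbour in B
  have hdom : ∀ z ∈ Z, ∃ u ∈ B, G.Adj z u := by
    by_contra hcon
    push_neg at hcon
    obtain ⟨zs, hzsZ, hzsB⟩ := hcon
    have hzsS : zs ∈ S := hZS hzsZ
    -- find an outside neighbour w of zs
    have hnbsub : nb G Z zs ⊆ nb G S zs := nb_mono hZS zs
    have hwex : (nb G S zs \ nb G Z zs).Nonempty := by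
      rw [← Finset.card_pos, Finset.card_sdiff_of_subset hnbsub]
      have h3 := hSdeg zs hzsS
      have h2 : dg G Z zs = 2 := hreg zs hzsZ
      rw [dg] at h3 h2
      omega
    obtain ⟨w, hw⟩ := hwex
    obtain ⟨hwnbS, hwnbZ⟩ := Finset.mem_sdiff.mp hw
    obtain ⟨hwS, hwadj⟩ := mem_nb.mp hwnbS
    have hwZ : w ∉ Z := fun hwZ => hwnbZ (mem_nb.mpr ⟨hwZ, hwadj⟩)
    have hwB : w ∉ B := fun hwB => hzsB w hwB hwadj
    have hwSZ : w ∈ S \ Z := Finset.mem_sdiff.mpr ⟨hwS, hwZ⟩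
    set B' : Finset V := cp G (S \ Z) w with hB'def
    have hwB' : w ∈ B' := cp_self hwSZ
    have hB'sub : B' ⊆ S \ Z := cp_subset
    have hB'S : B' ⊆ S := fun x hx => (Finset.mem_sdiff.mp (hB'sub hx)).1
    have hB'Z : ∀ x ∈ B', x ∉ Z := fun x hx => (Finset.mem_sdiff.mp (hB'sub hx)).2
    have hB'conn : Cn G B' := cp_conn hwSZ
    have hB'B : ∀ x ∈ B', x ∉ B := by
      intro x hxB' hxB
      have h1 : cp G (S \ Z) x = B' := cp_eq_of_mem hxB'
      have h2 : cp G (S \ Z) x = B := by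
        rw [hBeq]
        exact cp_eq_of_mem (hBeq ▸ hxB)
      exact hwB (h2 ▸ h1.symm ▸ hwB')
    have hB'closed : ∀ x ∈ B', ∀ y, y ∈ S → y ∉ Z → G.Adj x y → y ∈ B' := by
      intro x hx y hyS hyZ hadj
      exact cp_closed hx (Finset.mem_sdiff.mpr ⟨hyS, hyZ⟩) hadj
    have hzsB' : zs ∉ B' := fun h => hB'Z zs h hzsZ
    -- CASE1 : a pair of distinct attachment vertices with an s available
    have hCASE1 : ∀ v ∈ Z, v ≠ zs → (∃ u ∈ B', G.Adj v u) →
        ∀ s ∈ Z, (∃ u ∈ B, G.Adj s u) → s ≠ v → False := by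
      intro v hvZ hvzs hvB' s hsZ hsB hsv
      have hszs : s ≠ zs := by
        rintro rfl
        obtain ⟨u, hu, hadj⟩ := hsB
        exact hzsB u hu hadj
      have hvB'mem : v ∉ B' := fun h => hB'Z v h hvZ
      have hzsv : zs ≠ v := Ne.symm hvzs
      obtain ⟨w'', hw''B', hw''adj⟩ := hvB'
      -- minimal connected subset P of B' containing w and w''
      obtain ⟨P, hPB', hPpred, hPmin⟩ := exists_min_subset B'
        (fun C => w ∈ C ∧ w'' ∈ C ∧ Cn G C) ⟨hwB', hw''B', hB'conn⟩
      obtain ⟨hwP, hw''P, hPconn⟩ := hPpred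
      have hPS : P ⊆ S := hPB'.trans hB'S
      have hPZ : ∀ p ∈ P, p ∉ Z := fun p hp => hB'Z p (hPB' hp)
      have hPB : ∀ p ∈ P, p ∉ B := fun p hp => hB'B p (hPB' hp)
      have hzsP : zs ∉ P := fun h => hPZ zs h hzsZ
      have hvP : v ∉ P := fun h => hPZ v h hvZ
      have hsP : s ∉ P := fun h => hPZ s h hsZ
      have hPdeg : ∀ p ∈ P, p ≠ w → p ≠ w'' → 2 ≤ dg G P p := by
        intro p hp hpw hpw''
        by_contra hd
        push_neg at hd
        have hle : dg G P p ≤ 1 := by omega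
        have heq := hPmin (P.erase p) (Finset.erase_subset _ _)
          ⟨Finset.mem_erase.mpr ⟨Ne.symm hpw, hwP⟩,
           Finset.mem_erase.mpr ⟨Ne.symm hpw'', hw''P⟩, leaf_conn hPconn hp hle⟩
        exact (Finset.notMem_erase p P) (heq.symm ▸ hp)
      -- degree bound for all of P inside any superset containing zs, v, P
      have hPdegW : ∀ (W : Finset V), zs ∈ W → v ∈ W → P ⊆ W → ∀ p ∈ P, 2 ≤ dg G W p := by
        intro W hzsW hvW hPW p hp
        by_cases hpw : p = w
        · subst hpw
          by_cases hww : p = w''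
          · exact dg_ge_two hzsW hvW hwadj.symm (hww ▸ hw''adj.symm) hzsv
          · obtain ⟨c, hc⟩ := exists_nbr_of_rtg (hPconn p hp w'' hw''P) hww
            obtain ⟨hcP, hcadj⟩ := mem_nb.mp hc
            have hczs : zs ≠ c := fun he => hzsP (he ▸ hcP)
            exact dg_ge_two hzsW (hPW hcP) hwadj.symm hcadj hczs
        · by_cases hpw'' : p = w''
          · subst hpw''
            obtain ⟨c, hc⟩ := exists_nbr_of_rtg (hPconn p hp w hwP) (fun he => hpw he)
            obtain ⟨hcP, hcadj⟩ := mem_nb.mp hc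
            have hvc : v ≠ c := fun he => hvP (he ▸ hcP)
            exact dg_ge_two hvW (hPW hcP) hw''adj.symm hcadj hvc
          · have h2 := hPdeg p hp hpw hpw''
            have hmono := Finset.card_le_card (nb_mono (G := G) hPW p)
            rw [dg] at *
            omega
      by_cases hadjzv : G.Adj zs v
      · -- adjacent case : W = {zs, v} ∪ P
        set W : Finset V := insert zs (insert v P) with hWdef
        have hPW : P ⊆ W := (Finset.subset_insert _ _).trans (Finset.subset_insert _ _)
        have hzsW : zs ∈ W := Finset.mem_insert_self _ _
        have hvW : v ∈ W := Finset.mem_insert.mpr (Or.inr (Finset.mem_insert_self _ _))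
        have hWcyc : Cyclic G W := by
          refine ⟨⟨zs, hzsW⟩, fun x hx => ?_⟩
          rcases Finset.mem_insert.mp hx with rfl | hx
          · exact dg_ge_two hvW (hPW hwP) hadjzv hwadj (fun he => hvP (he ▸ hwP))
          rcases Finset.mem_insert.mp hx with rfl | hx
          · exact dg_ge_two hzsW (hPW hw''P) hadjzv.symm hw''adj
              (fun he => hzsP (he ▸ hw''P))
          · exact hPdegW W hzsW hvW hPW x hx
        have hWS : W ⊆ S := by
          intro x hx
          rcases Finset.mem_insert.mp hx with rfl | hx
          · exact hzsS
          rcases Finset.mem_insert.mp hx with rfl | hx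
          · exact hZS hvZ
          · exact hPS hx
        have hWB : ∀ x ∈ W, x ∉ B := by
          intro x hx
          rcases Finset.mem_insert.mp hx with rfl | hx
          · exact hZB _ hzsZ
          rcases Finset.mem_insert.mp hx with rfl | hx
          · exact hZB _ hvZ
          · exact hPB x hx
        have hsW : s ∉ W := by
          intro hx
          rcases Finset.mem_insert.mp hx with he | hx
          · exact hszs he
          rcases Finset.mem_insert.mp hx with he | hx
          · exact hsv he
          · exact hsP hx
        exact hMAX W hWS hWcyc hWB s (hZS hsZ) hsW (hZB s hsZ) hsB
      · -- non-adjacent case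
        set Z' : Finset V := (Z.erase zs).erase v with hZ'def
        have hZ'Z : Z' ⊆ Z := (Finset.erase_subset _ _).trans (Finset.erase_subset _ _)
        have hsZ' : s ∈ Z' := Finset.mem_erase.mpr ⟨hsv, Finset.mem_erase.mpr ⟨hszs, hsZ⟩⟩
        have hzsZ' : zs ∉ Z' := fun h => (Finset.notMem_erase zs Z) (Finset.mem_of_mem_erase h)
        have hvZ' : v ∉ Z' := fun h => (Finset.notMem_erase v (Z.erase zs)) h
        set K : Finset V := cp G Z' s with hKdef
        have hKsub : K ⊆ Z' := cp_subset
        have hKZ : K ⊆ Z := hKsub.trans hZ'Z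
        have hKconn : Cn G K := cp_conn hsZ'
        have hKne : K.Nonempty := ⟨s, cp_self hsZ'⟩
        have hzsK : zs ∉ K := fun h => hzsZ' (hKsub h)
        have hvK : v ∉ K := fun h => hvZ' (hKsub h)
        have hKpeel : ∀ W ⊆ K, W.Nonempty → ∃ x ∈ W, dg G W x ≤ 1 := by
          intro W hWK hWne
          apply isCyc_peel hZcyc (hWK.trans hKZ) _ hWne
          intro hWZ
          exact hzsK (hWK (hWZ ▸ hzsZ))
        have hKDS : DS G K + 2 = 2 * K.card := DS_eq_of_conn_peel hKconn hKne hKpeel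
        -- membership of Z-neighbours of K-vertices
        have hKclo : ∀ x ∈ K, ∀ y ∈ nb G Z x, y ∈ K ∨ y = zs ∨ y = v := by
          intro x hx y hy
          obtain ⟨hyZ, hadj⟩ := mem_nb.mp hy
          by_cases h1 : y = zs
          · exact Or.inr (Or.inl h1)
          by_cases h2 : y = v
          · exact Or.inr (Or.inr h2)
          exact Or.inl (cp_closed hx
            (Finset.mem_erase.mpr ⟨h2, Finset.mem_erase.mpr ⟨h1, hyZ⟩⟩) hadj)
        -- counting : edges from K to {zs, v} number exactly 2
        have hcount : (nb G K zs).card + (nb G K v).card = 2 := by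
          have hsum1 : ∑ x ∈ K, dg G Z x = 2 * K.card := by
            rw [Finset.sum_congr rfl (fun x hx => hreg x (hKZ hx)), Finset.sum_const,
              smul_eq_mul, mul_comm]
          have hpoint : ∀ x ∈ K, dg G Z x = dg G K x + (nb G Z x \ K).card := by
            intro x hx
            have hKx : nb G K x = nb G Z x ∩ K := by
              ext y
              simp only [mem_nb, Finset.mem_inter]
              exact ⟨fun ⟨h1, h2⟩ => ⟨⟨hKZ h1, h2⟩, h1⟩, fun ⟨⟨_, h2⟩, h3⟩ => ⟨h3, h2⟩⟩
            rw [dg, dg, hKx, ← Finset.card_inter_add_card_sdiff (nb G Z x) K]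
          have hsdiff : ∀ x ∈ K, (nb G Z x \ K).card
              = (if zs ∈ nb G Z x then 1 else 0) + (if v ∈ nb G Z x then 1 else 0) := by
            intro x hx
            have hsub : nb G Z x \ K ⊆ {zs, v} := by
              intro y hy
              obtain ⟨hy1, hy2⟩ := Finset.mem_sdiff.mp hy
              rcases hKclo x hx y hy1 with h | h | h
              · exact absurd h hy2
              · simp [h]
              · simp [h]
            rw [card_subset_pair hsub hzsv]
            congr 1
            · by_cases h : zs ∈ nb G Z x
              · rw [if_pos h, if_pos (Finset.mem_sdiff.mpr ⟨h, hzsK⟩)]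
              · rw [if_neg h, if_neg (fun hc => h (Finset.mem_sdiff.mp hc).1)]
            · by_cases h : v ∈ nb G Z x
              · rw [if_pos h, if_pos (Finset.mem_sdiff.mpr ⟨h, hvK⟩)]
              · rw [if_neg h, if_neg (fun hc => h (Finset.mem_sdiff.mp hc).1)]
          -- assemble the sums
          have hsum2 : ∑ x ∈ K, dg G Z x = DS G K +
              ((∑ x ∈ K, if zs ∈ nb G Z x then 1 else 0)
                + (∑ x ∈ K, if v ∈ nb G Z x then 1 else 0)) := by
            rw [DS, ← Finset.sum_add_distrib, ← Finset.sum_add_distrib]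
            apply Finset.sum_congr rfl
            intro x hx
            rw [hpoint x hx, hsdiff x hx]
          have hzssum : (∑ x ∈ K, if zs ∈ nb G Z x then 1 else 0) = (nb G K zs).card := by
            rw [nb, Finset.card_filter]
            apply Finset.sum_congr rfl
            intro x hx
            refine if_congr ?_ rfl rfl
            rw [mem_nb]
            exact ⟨fun ⟨_, h⟩ => h.symm, fun h => ⟨hzsZ, h.symm⟩⟩
          have hvsum : (∑ x ∈ K, if v ∈ nb G Z x then 1 else 0) = (nb G K v).card := by
            rw [nb, Finset.card_filter]
            apply Finset.sum_congr rfl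
            intro x hx
            refine if_congr ?_ rfl rfl
            rw [mem_nb]
            exact ⟨fun ⟨_, h⟩ => h.symm, fun h => ⟨hvZ, h.symm⟩⟩
          rw [hzssum, hvsum] at hsum2
          omega
        -- neighbours of zs and v in Z, counted in / out of K
        have hnbK : ∀ t : V, t ∈ Z → nb G K t = nb G Z t ∩ K := by
          intro t ht
          ext y
          simp only [mem_nb, Finset.mem_inter]
          exact ⟨fun ⟨h1, h2⟩ => ⟨⟨hKZ h1, h2⟩, h1⟩, fun ⟨⟨_, h2⟩, h3⟩ => ⟨h3, h2⟩⟩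
        have hKZS : K ⊆ S := hKZ.trans hZS
        by_cases hn12 : (nb G K zs).card = 2
        · -- both neighbours of zs lie in K ; then v has none in K
          have hv0 : (nb G K v).card = 0 := by omega
          have hvnone : ∀ x ∈ K, ¬ G.Adj v x := by
            intro x hx hadj
            have : x ∈ nb G K v := mem_nb.mpr ⟨hx, hadj⟩
            rw [Finset.card_eq_zero.mp hv0] at this
            exact Finset.notMem_empty x this
          set W : Finset V := insert zs K with hWdef
          have hWcyc : Cyclic G W := by
            refine ⟨⟨zs, Finset.mem_insert_self _ _⟩, fun x hx => ?_⟩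
            rcases Finset.mem_insert.mp hx with rfl | hxK
            · have hmono := Finset.card_le_card (nb_mono (G := G) (Finset.subset_insert x K) x)
              rw [← hWdef] at hmono
              have hgoal : 2 ≤ (nb G W x).card := by omega
              exact hgoal
            · have hsub : nb G Z x ⊆ nb G W x := by
                intro y hy
                have hadj := (mem_nb.mp hy).2
                rcases hKclo x hxK y hy with h | h | h
                · exact mem_nb.mpr ⟨Finset.mem_insert.mpr (Or.inr h), hadj⟩
                · exact mem_nb.mpr ⟨h ▸ Finset.mem_insert_self _ _, hadj⟩
                · exact absurd (h ▸ hadj : G.Adj x v) (fun ha => hvnone x hxK ha.symm)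
              have hmono := Finset.card_le_card hsub
              have h2 := hreg x (hKZ hxK)
              rw [dg] at *
              omega
          have hWS : W ⊆ S := Finset.insert_subset hzsS hKZS
          have hWB : ∀ x ∈ W, x ∉ B := by
            intro x hx
            rcases Finset.mem_insert.mp hx with rfl | hx
            · exact hZB _ hzsZ
            · exact hZB _ (hKZ hx)
          have hWcard : W.card < Z.card := by
            have hsub : W ⊆ Z.erase v := by
              intro x hx
              rcases Finset.mem_insert.mp hx with rfl | hx
              · exact Finset.mem_erase.mpr ⟨hzsv, hzsZ⟩
              · exact Finset.mem_erase.mpr ⟨fun he => hvK (he ▸ hx), hKZ hx⟩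
            have h1 := Finset.card_le_card hsub
            have h2 : (Z.erase v).card = Z.card - 1 := Finset.card_erase_of_mem hvZ
            have h3 : 1 ≤ Z.card := Finset.card_pos.mpr hZne
            omega
          exact hMAX2 W hWS hWcyc hWB hWcard
        · by_cases hm12 : (nb G K v).card = 2
          · -- symmetric : both neighbours of v lie in K
            have hz0 : (nb G K zs).card = 0 := by omega
            have hzsnone : ∀ x ∈ K, ¬ G.Adj zs x := by
              intro x hx hadj
              have : x ∈ nb G K zs := mem_nb.mpr ⟨hx, hadj⟩
              rw [Finset.card_eq_zero.mp hz0] at this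
              exact Finset.notMem_empty x this
            set W : Finset V := insert v K with hWdef
            have hWcyc : Cyclic G W := by
              refine ⟨⟨v, Finset.mem_insert_self _ _⟩, fun x hx => ?_⟩
              rcases Finset.mem_insert.mp hx with rfl | hxK
              · have hmono := Finset.card_le_card (nb_mono (G := G) (Finset.subset_insert x K) x)
                rw [← hWdef] at hmono
                have hgoal : 2 ≤ (nb G W x).card := by omega
                exact hgoal
              · have hsub : nb G Z x ⊆ nb G W x := by
                  intro y hy
                  have hadj := (mem_nb.mp hy).2
                  rcases hKclo x hxK y hy with h | h | h
                  · exact mem_nb.mpr ⟨Finset.mem_insert.mpr (Or.inr h), hadj⟩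
                  · exact absurd (h ▸ hadj : G.Adj x zs) (fun ha => hzsnone x hxK ha.symm)
                  · exact mem_nb.mpr ⟨h ▸ Finset.mem_insert_self _ _, hadj⟩
                have hmono := Finset.card_le_card hsub
                have h2 := hreg x (hKZ hxK)
                rw [dg] at *
                omega
            have hWS : W ⊆ S := Finset.insert_subset (hZS hvZ) hKZS
            have hWB : ∀ x ∈ W, x ∉ B := by
              intro x hx
              rcases Finset.mem_insert.mp hx with rfl | hx
              · exact hZB _ hvZ
              · exact hZB _ (hKZ hx)
            have hWcard : W.card < Z.card := by
              have hsub : W ⊆ Z.erase zs := by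
                intro x hx
                rcases Finset.mem_insert.mp hx with rfl | hx
                · exact Finset.mem_erase.mpr ⟨hvzs, hvZ⟩
                · exact Finset.mem_erase.mpr ⟨fun he => hzsK (he ▸ hx), hKZ hx⟩
              have h1 := Finset.card_le_card hsub
              have h2 : (Z.erase zs).card = Z.card - 1 := Finset.card_erase_of_mem hzsZ
              have h3 : 1 ≤ Z.card := Finset.card_pos.mpr hZne
              omega
            exact hMAX2 W hWS hWcyc hWB hWcard
          · -- mixed : zs and v both have a Z-neighbour outside K
            have hzs2 : (nb G Z zs).card = 2 := hreg zs hzsZ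
            have hv2 : (nb G Z v).card = 2 := hreg v hvZ
            have hnex : (nb G Z zs \ K).Nonempty := by
              rw [← Finset.card_pos]
              have := Finset.card_inter_add_card_sdiff (nb G Z zs) K
              rw [← hnbK zs hzsZ] at this
              omega
            have hmex : (nb G Z v \ K).Nonempty := by
              rw [← Finset.card_pos]
              have := Finset.card_inter_add_card_sdiff (nb G Z v) K
              rw [← hnbK v hvZ] at this
              omega
            obtain ⟨n, hn⟩ := hnex
            obtain ⟨hnnb, hnK⟩ := Finset.mem_sdiff.mp hn
            obtain ⟨hnZ, hnadj⟩ := mem_nb.mp hnnb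
            obtain ⟨m, hm⟩ := hmex
            obtain ⟨hmnb, hmK⟩ := Finset.mem_sdiff.mp hm
            obtain ⟨hmZ, hmadj⟩ := mem_nb.mp hmnb
            have hnzs : n ≠ zs := fun he => G.irrefl (he ▸ hnadj)
            have hnv : n ≠ v := fun he => hadjzv (he ▸ hnadj)
            have hmv : m ≠ v := fun he => G.irrefl (he ▸ hmadj)
            have hmzs : m ≠ zs := fun he => hadjzv ((he ▸ hmadj : G.Adj v zs)).symm
            have hnZ' : n ∈ Z' := Finset.mem_erase.mpr ⟨hnv, Finset.mem_erase.mpr ⟨hnzs, hnZ⟩⟩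
            have hmZ' : m ∈ Z' := Finset.mem_erase.mpr ⟨hmv, Finset.mem_erase.mpr ⟨hmzs, hmZ⟩⟩
            set A : Finset V := Z' \ K with hAdef
            have hnA : n ∈ A := Finset.mem_sdiff.mpr ⟨hnZ', hnK⟩
            have hmA : m ∈ A := Finset.mem_sdiff.mpr ⟨hmZ', hmK⟩
            have hAZ : A ⊆ Z := (Finset.sdiff_subset).trans hZ'Z
            set W : Finset V := insert zs (insert v (A ∪ P)) with hWdef
            have hPW : P ⊆ W := by
              intro p hp
              exact Finset.mem_insert.mpr (Or.inr (Finset.mem_insert.mpr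
                (Or.inr (Finset.mem_union_right _ hp))))
            have hAW : A ⊆ W := by
              intro a ha
              exact Finset.mem_insert.mpr (Or.inr (Finset.mem_insert.mpr
                (Or.inr (Finset.mem_union_left _ ha))))
            have hzsW : zs ∈ W := Finset.mem_insert_self _ _
            have hvW : v ∈ W := Finset.mem_insert.mpr (Or.inr (Finset.mem_insert_self _ _))
            have hWcyc : Cyclic G W := by
              refine ⟨⟨zs, hzsW⟩, fun x hx => ?_⟩
              rcases Finset.mem_insert.mp hx with rfl | hx
              · exact dg_ge_two (hAW hnA) (hPW hwP) hnadj hwadj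
                  (fun he => hB'Z n (hPB' (he ▸ hwP)) hnZ)
              rcases Finset.mem_insert.mp hx with rfl | hx
              · exact dg_ge_two (hAW hmA) (hPW hw''P) hmadj hw''adj
                  (fun he => hB'Z m (hPB' (he ▸ hw''P)) hmZ)
              rcases Finset.mem_union.mp hx with hxA | hxP
              · -- x ∈ A : its two Z-neighbours stay in W
                obtain ⟨hxZ', hxK⟩ := Finset.mem_sdiff.mp hxA
                have hsub : nb G Z x ⊆ nb G W x := by
                  intro y hy
                  obtain ⟨hyZ, hadj⟩ := mem_nb.mp hy
                  by_cases h1 : y = zs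
                  · exact mem_nb.mpr ⟨h1 ▸ hzsW, hadj⟩
                  by_cases h2 : y = v
                  · exact mem_nb.mpr ⟨h2 ▸ hvW, hadj⟩
                  have hyZ' : y ∈ Z' := Finset.mem_erase.mpr ⟨h2, Finset.mem_erase.mpr ⟨h1, hyZ⟩⟩
                  have hyK : y ∉ K := fun hyK => hxK (cp_closed hyK hxZ' hadj.symm)
                  exact mem_nb.mpr ⟨hAW (Finset.mem_sdiff.mpr ⟨hyZ', hyK⟩), hadj⟩
                have hmono := Finset.card_le_card hsub
                have h2 := hreg x (hZ'Z hxZ')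
                rw [dg] at *
                omega
              · exact hPdegW W hzsW hvW hPW x hxP
            have hWS : W ⊆ S := by
              intro x hx
              rcases Finset.mem_insert.mp hx with rfl | hx
              · exact hzsS
              rcases Finset.mem_insert.mp hx with rfl | hx
              · exact hZS hvZ
              rcases Finset.mem_union.mp hx with hxA | hxP
              · exact hZS (hAZ hxA)
              · exact hPS hxP
            have hWB : ∀ x ∈ W, x ∉ B := by
              intro x hx
              rcases Finset.mem_insert.mp hx with rfl | hx
              · exact hZB _ hzsZ
              rcases Finset.mem_insert.mp hx with rfl | hx
              · exact hZB _ hvZ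
              rcases Finset.mem_union.mp hx with hxA | hxP
              · exact hZB _ (hAZ hxA)
              · exact hPB _ hxP
            have hsW : s ∉ W := by
              intro hx
              rcases Finset.mem_insert.mp hx with he | hx
              · exact hszs he
              rcases Finset.mem_insert.mp hx with he | hx
              · exact hsv he
              rcases Finset.mem_union.mp hx with hxA | hxP
              · exact (Finset.mem_sdiff.mp hxA).2 (cp_self hsZ')
              · exact hsP hxP
            exact hMAX W hWS hWcyc hWB s (hZS hsZ) hsW (hZB s hsZ) hsB
    -- dispatch into the cases
    by_cases h2i : ∀ z ∈ Z, (∃ u ∈ B', G.Adj z u) → z = zs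
    · -- B' is attached only at zs : B' itself is cyclic
      have hB'cyc : Cyclic G B' := by
        refine ⟨⟨w, hwB'⟩, fun b' hb' => ?_⟩
        have hb'S : b' ∈ S := hB'S hb'
        have hsub : nb G S b' ⊆ insert zs (nb G B' b') := by
          intro y hy
          obtain ⟨hyS, hadj⟩ := mem_nb.mp hy
          by_cases hyZ : y ∈ Z
          · exact Finset.mem_insert.mpr (Or.inl (h2i y hyZ ⟨b', hb', hadj.symm⟩))
          · exact Finset.mem_insert.mpr (Or.inr (mem_nb.mpr
              ⟨hB'closed b' hb' y hyS hyZ hadj, hadj⟩))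
        have h3 := hSdeg b' hb'S
        have hc := Finset.card_le_card hsub
        have hins := Finset.card_insert_le zs (nb G B' b')
        rw [dg] at h3 ⊢
        omega
      obtain ⟨s, hsZ, hsB⟩ := hSB
      have hsB' : s ∉ B' := fun h => hB'Z s h hsZ
      exact hMAX B' hB'S hB'cyc hB'B s (hZS hsZ) hsB' (hZB s hsZ) hsB
    · push_neg at h2i
      obtain ⟨v, hvZ, hvB', hvzs⟩ := h2i
      obtain ⟨s, hsZ, hsB⟩ := hSB
      by_cases hsv : s = v
      · -- the only B-attachment is v itself
        by_cases h2ii : ∃ v' ∈ Z, v' ≠ zs ∧ v' ≠ v ∧ ∃ u ∈ B', G.Adj v' u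
        · obtain ⟨v', hv'Z, hv'zs, hv'v, hv'B'⟩ := h2ii
          exact hCASE1 v' hv'Z hv'zs hv'B' s hsZ hsB (hsv ▸ Ne.symm hv'v)
        · -- all B'-attachments are among {zs, v} ; v = s is the B-attachment
          push_neg at h2ii
          have hS'sub : ∀ z ∈ Z, (∃ u ∈ B', G.Adj z u) → z = zs ∨ z = v := by
            intro z hz hzB'
            by_cases h1 : z = zs
            · exact Or.inl h1
            by_cases h2 : z = v
            · exact Or.inr h2
            · obtain ⟨u, hu, hadj⟩ := hzB'
              exact absurd (h2ii z hz h1 h2 u hu hadj) not_false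
          have hvB : ∃ u ∈ B, G.Adj v u := hsv ▸ hsB
          have hvzs' : v ≠ zs := hvzs
          have hvS : v ∈ S := hZS hvZ
          have hvnB : v ∉ B := hZB v hvZ
          have hvnB' : v ∉ B' := fun h => hB'Z v h hvZ
          -- leaves of B' are adjacent to both zs and v
          by_cases hpeelB' : ∀ W ⊆ B', W.Nonempty → ∃ x ∈ W, dg G W x ≤ 1
          · -- B' is a tree : find two leaves
            have hB'ne : B'.Nonempty := ⟨w, hwB'⟩
            have hB'card2 : 2 ≤ B'.card := by
              by_contra hc
              push_neg at hc
              have h1 : B'.card = 1 := by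
                have := Finset.card_pos.mpr hB'ne
                omega
              obtain ⟨x, hx⟩ := Finset.card_eq_one.mp h1
              have hwx : w = x := by
                have := hwB'
                rw [hx, Finset.mem_singleton] at this
                exact this
              -- w has all its neighbours in {zs, v}
              have hsub : nb G S w ⊆ {zs, v} := by
                intro y hy
                obtain ⟨hyS, hadj⟩ := mem_nb.mp hy
                by_cases hyZ : y ∈ Z
                · rcases hS'sub y hyZ ⟨w, hwB', hadj.symm⟩ with h | h
                  · simp [h]
                  · simp [h]
                · have hyB' : y ∈ B' := hB'closed w hwB' y hyS hyZ hadj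
                  rw [hx, Finset.mem_singleton] at hyB'
                  exact absurd (hyB' ▸ hadj : G.Adj w (x : V))
                    (hwx ▸ (fun hc' => G.irrefl hc'))
              have h3 := hSdeg w hwS
              have hc2 := Finset.card_le_card hsub
              rw [Finset.card_pair (Ne.symm hvzs)] at hc2
              rw [dg] at h3
              omega
            have hDSB' : DS G B' + 2 = 2 * B'.card :=
              DS_eq_of_conn_peel hB'conn hB'ne hpeelB'
            have hdg1 : ∀ x ∈ B', 1 ≤ dg G B' x := by
              intro x hx
              obtain ⟨y, hy, hyx⟩ := Finset.exists_mem_ne (s := B') (by omega) x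
              obtain ⟨c, hc⟩ := exists_nbr_of_rtg (hB'conn x hx y hy) (Ne.symm hyx)
              exact Finset.card_pos.mpr ⟨c, hc⟩
            set L : Finset V := B'.filter (fun x => dg G B' x ≤ 1) with hLdef
            have hLsub : L ⊆ B' := Finset.filter_subset _ _
            have hL2 : 2 ≤ L.card := by
              by_contra hL
              push_neg at hL
              have hsum : 2 * B'.card ≤ DS G B' + L.card := by
                have hx2 : ∀ x ∈ B', 2 ≤ dg G B' x + (if x ∈ L then 1 else 0) := by
                  intro x hx
                  by_cases hxL : x ∈ L
                  · rw [if_pos hxL]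
                    have := hdg1 x hx
                    omega
                  · rw [if_neg hxL]
                    have : ¬ dg G B' x ≤ 1 := fun hle =>
                      hxL (Finset.mem_filter.mpr ⟨hx, hle⟩)
                    omega
                calc 2 * B'.card = ∑ _x ∈ B', 2 := by
                      rw [Finset.sum_const, smul_eq_mul, mul_comm]
                _ ≤ ∑ x ∈ B', (dg G B' x + if x ∈ L then 1 else 0) := Finset.sum_le_sum hx2
                _ = DS G B' + ∑ x ∈ B', (if x ∈ L then 1 else 0) := by
                      rw [Finset.sum_add_distrib, DS]
                _ = DS G B' + L.card := by
                      congr 1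
                      rw [hLdef, Finset.card_filter]
                      apply Finset.sum_congr rfl
                      intro x hx
                      refine if_congr ?_ rfl rfl
                      simp only [hLdef, Finset.mem_filter]
                      exact ⟨fun h => h.2, fun h => ⟨hx, h⟩⟩
              omega
            obtain ⟨x1, hx1L, x2, hx2L, hx12⟩ := Finset.one_lt_card.mp (by omega : 1 < L.card)
            -- every leaf is adjacent to both zs and v
            have hleaf : ∀ x ∈ L, G.Adj zs x ∧ G.Adj v x := by
              intro x hxL
              obtain ⟨hxB', hxd⟩ := Finset.mem_filter.mp hxL
              have hxS : x ∈ S := hB'S hxB'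
              have hsub : nb G S x ⊆ insert zs (insert v (nb G B' x)) := by
                intro y hy
                obtain ⟨hyS, hadj⟩ := mem_nb.mp hy
                by_cases hyZ : y ∈ Z
                · rcases hS'sub y hyZ ⟨x, hxB', hadj.symm⟩ with h | h
                  · exact Finset.mem_insert.mpr (Or.inl h)
                  · exact Finset.mem_insert.mpr (Or.inr (Finset.mem_insert.mpr (Or.inl h)))
                · exact Finset.mem_insert.mpr (Or.inr (Finset.mem_insert.mpr (Or.inr
                    (mem_nb.mpr ⟨hB'closed x hxB' y hyS hyZ hadj, hadj⟩))))
              have h3 := hSdeg x hxS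
              constructor
              · by_contra hnadj
                -- then nb S x ⊆ insert v (nb B' x) : card ≤ 2
                have hsub2 : nb G S x ⊆ insert v (nb G B' x) := by
                  intro y hy
                  rcases Finset.mem_insert.mp (hsub hy) with rfl | hy2
                  · exact absurd (mem_nb.mp hy).2.symm hnadj
                  · exact hy2
                have hc2 := Finset.card_le_card hsub2
                have hins := Finset.card_insert_le v (nb G B' x)
                rw [dg] at h3 hxd
                omega
              · by_contra hnadj
                have hsub2 : nb G S x ⊆ insert zs (nb G B' x) := by
                  intro y hy
                  rcases Finset.mem_insert.mp (hsub hy) with rfl | hy2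
                  · exact Finset.mem_insert.mpr (Or.inl rfl)
                  rcases Finset.mem_insert.mp hy2 with rfl | hy3
                  · exact absurd (mem_nb.mp hy).2.symm hnadj
                  · exact Finset.mem_insert.mpr (Or.inr hy3)
                have hc2 := Finset.card_le_card hsub2
                have hins := Finset.card_insert_le zs (nb G B' x)
                rw [dg] at h3 hxd
                omega
            -- W := insert zs B' is cyclic
            set W : Finset V := insert zs B' with hWdef
            have hWcyc : Cyclic G W := by
              refine ⟨⟨zs, Finset.mem_insert_self _ _⟩, fun x hx => ?_⟩
              rcases Finset.mem_insert.mp hx with rfl | hxB'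
              · exact dg_ge_two (Finset.mem_insert.mpr (Or.inr (hLsub hx1L)))
                  (Finset.mem_insert.mpr (Or.inr (hLsub hx2L)))
                  (hleaf x1 hx1L).1 (hleaf x2 hx2L).1 hx12
              · by_cases hxL : x ∈ L
                · have h1 := hdg1 x hxB'
                  obtain ⟨c, hc⟩ := Finset.card_pos.mp h1
                  obtain ⟨hcB', hcadj⟩ := mem_nb.mp hc
                  exact dg_ge_two (Finset.mem_insert_self _ _)
                    (Finset.mem_insert.mpr (Or.inr hcB'))
                    (hleaf x hxL).1.symm hcadj (fun he => hzsB' (he ▸ hcB'))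
                · have h2 : 2 ≤ dg G B' x := by
                    have hn : ¬ dg G B' x ≤ 1 := fun hle =>
                      hxL (Finset.mem_filter.mpr ⟨hxB', hle⟩)
                    omega
                  have hmono := Finset.card_le_card
                    (nb_mono (G := G) (Finset.subset_insert zs B') x)
                  rw [← hWdef] at hmono
                  have hgoal : 2 ≤ (nb G W x).card := by
                    rw [dg] at h2
                    omega
                  exact hgoal
            have hWS : W ⊆ S := Finset.insert_subset hzsS hB'S
            have hWB : ∀ x ∈ W, x ∉ B := by
              intro x hx
              rcases Finset.mem_insert.mp hx with rfl | hx
              · exact hZB _ hzsZ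
              · exact hB'B _ hx
            have hvW : v ∉ W := by
              intro hx
              rcases Finset.mem_insert.mp hx with he | hx
              · exact hvzs he
              · exact hvnB' hx
            exact hMAX W hWS hWcyc hWB v hvS hvW hvnB hvB
          · push_neg at hpeelB'
            obtain ⟨W, hWB', hWne, hWdg⟩ := hpeelB'
            have hWcyc : Cyclic G W := ⟨hWne, fun x hx => by have := hWdg x hx; omega⟩
            have hWS : W ⊆ S := hWB'.trans hB'S
            have hWB : ∀ x ∈ W, x ∉ B := fun x hx => hB'B x (hWB' hx)
            have hvW : v ∉ W := fun h => hvnB' (hWB' h)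
            exact hMAX W hWS hWcyc hWB v hvS hvW hvnB hvB
      · exact hCASE1 v hvZ hvzs hvB' s hsZ hsB (Ne.symm (fun he => hsv he.symm))
  -- build the dominating K₄ model
  obtain ⟨z0, hz0Z⟩ := hZne
  have h2 : (nb G Z z0).card = 2 := hreg z0 hz0Z
  obtain ⟨z1, y, hz1y, hpair⟩ := Finset.card_eq_two.mp h2
  have hz1nb : z1 ∈ nb G Z z0 := by rw [hpair]; exact Finset.mem_insert_self _ _
  have hynb : y ∈ nb G Z z0 := by rw [hpair]; simp
  obtain ⟨hz1Z, hadj01⟩ := mem_nb.mp hz1nb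
  obtain ⟨hyZ, hadj0y⟩ := mem_nb.mp hynb
  have hz0z1 : z0 ≠ z1 := fun he => G.irrefl (he ▸ hadj01)
  have hz0y : z0 ≠ y := fun he => G.irrefl (he ▸ hadj0y)
  set Pf : Finset V := (Z.erase z0).erase z1 with hPfdef
  have hPfZ : Pf ⊆ Z := (Finset.erase_subset _ _).trans (Finset.erase_subset _ _)
  have hyPf : y ∈ Pf := Finset.mem_erase.mpr ⟨Ne.symm hz1y,
    Finset.mem_erase.mpr ⟨Ne.symm hz0y, hyZ⟩⟩
  have hz0Pf : z0 ∉ Pf := fun h => (Finset.notMem_erase z0 Z) (Finset.mem_of_mem_erase h)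
  have hz1Pf : z1 ∉ Pf := fun h => (Finset.notMem_erase z1 (Z.erase z0)) h
  -- z1's second neighbour
  have h2' : (nb G Z z1).card = 2 := hreg z1 hz1Z
  have hz0nb1 : z0 ∈ nb G Z z1 := mem_nb.mpr ⟨hz0Z, hadj01.symm⟩
  have hy1ex : ((nb G Z z1).erase z0).Nonempty := by
    rw [← Finset.card_pos, Finset.card_erase_of_mem hz0nb1]
    omega
  obtain ⟨y1, hy1⟩ := hy1ex
  obtain ⟨hy1z0, hy1nb⟩ := Finset.mem_erase.mp hy1
  obtain ⟨hy1Z, hadj1y1⟩ := mem_nb.mp hy1nb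
  have hy1z1 : y1 ≠ z1 := fun he => G.irrefl (he ▸ hadj1y1)
  have hy1Pf : y1 ∈ Pf := Finset.mem_erase.mpr ⟨hy1z1,
    Finset.mem_erase.mpr ⟨hy1z0, hy1Z⟩⟩
  -- degree sums for connectivity of Pf
  have hDSZ : DS G Z = 2 * Z.card := by
    rw [DS, Finset.sum_congr rfl hreg, Finset.sum_const, smul_eq_mul, mul_comm]
  have hz1e : z1 ∈ Z.erase z0 := Finset.mem_erase.mpr ⟨Ne.symm hz0z1, hz1Z⟩
  have hdg1e : dg G (Z.erase z0) z1 = 1 := by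
    rw [dg, nb_erase, Finset.card_erase_of_mem hz0nb1]
    omega
  have hDS1 : DS G Z = DS G (Z.erase z0) + 2 * dg G Z z0 := DS_erase hz0Z
  have hDS2 : DS G (Z.erase z0) = DS G Pf + 2 * dg G (Z.erase z0) z1 := DS_erase hz1e
  have hdgz0 : dg G Z z0 = 2 := hreg z0 hz0Z
  have hcards : Pf.card + 2 = Z.card := by
    rw [hPfdef, Finset.card_erase_of_mem hz1e, Finset.card_erase_of_mem hz0Z]
    have h1 : 1 ≤ Z.card := Finset.card_pos.mpr ⟨z0, hz0Z⟩
    have h2'' : 2 ≤ Z.card := by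
      by_contra hcc
      push_neg at hcc
      have : Z = {z0} := by
        apply Finset.eq_singleton_iff_unique_mem.mpr
        refine ⟨hz0Z, fun x hx => ?_⟩
        by_contra hne
        have := Finset.one_lt_card.mpr ⟨x, hx, z0, hz0Z, hne⟩
        omega
      rw [this] at hz1Z
      exact hz0z1 (Finset.mem_singleton.mp hz1Z).symm
    omega
  have hDSPf : DS G Pf + 2 = 2 * Pf.card := by omega
  have hPfpeel : ∀ W ⊆ Pf, W.Nonempty → ∃ x ∈ W, dg G W x ≤ 1 := by
    intro W hWPf hWne
    apply isCyc_peel hZcyc (hWPf.trans hPfZ) _ hWne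
    intro hWZ
    exact hz0Pf (hWPf (hWZ ▸ hz0Z))
  have hPfconn : Cn G Pf := by
    intro a ha b hb
    by_contra hcon2
    set K : Finset V := cp G Pf a with hKdef
    have haK : a ∈ K := cp_self ha
    have hbK : b ∉ K := fun h => hcon2 (mem_cp.mp h).2
    have hKsub : K ⊆ Pf := cp_subset
    have hclosed : ∀ x ∈ K, nb G Pf x ⊆ K := by
      intro x hx yy hyy
      obtain ⟨hyyPf, hadj⟩ := mem_nb.mp hyy
      exact cp_closed hx hyyPf hadj
    have hsplit : DS G Pf = DS G K + DS G (Pf \ K) := DS_split hKsub hclosed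
    have hKne : K.Nonempty := ⟨a, haK⟩
    have hKcne : (Pf \ K).Nonempty := ⟨b, Finset.mem_sdiff.mpr ⟨hb, hbK⟩⟩
    have hb1 : DS G K + 2 ≤ 2 * K.card :=
      DS_le_of_peel (fun W hW hWne => hPfpeel W (hW.trans hKsub) hWne) hKne
    have hb2 : DS G (Pf \ K) + 2 ≤ 2 * (Pf \ K).card :=
      DS_le_of_peel (fun W hW hWne => hPfpeel W (hW.trans Finset.sdiff_subset) hWne) hKcne
    have hcc : (Pf \ K).card + K.card = Pf.card :=
      Finset.card_sdiff_add_card_eq_card hKsub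
    omega
  have hPfne : Pf.Nonempty := ⟨y, hyPf⟩
  -- domination facts
  have hdomPf : ∀ z ∈ Pf, ∃ u ∈ B, G.Adj z u := fun z hz => hdom z (hPfZ hz)
  -- assemble the model
  refine ⟨fun i => match i with
    | 0 => (↑B : Set V)
    | 1 => (↑Pf : Set V)
    | 2 => (↑({z1} : Finset V) : Set V)
    | 3 => (↑({z0} : Finset V) : Set V), ?_, ?_, ?_, ?_⟩
  · intro i
    fin_cases i
    · exact ⟨b₀, by exact_mod_cast hb₀B⟩
    · exact ⟨y, by exact_mod_cast hyPf⟩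
    · exact ⟨z1, by simp⟩
    · exact ⟨z0, by simp⟩
  · have dBPf : Disjoint (↑B : Set V) (↑Pf : Set V) := by
      rw [Set.disjoint_left]
      intro x hx hx'
      exact hZB x (hPfZ (by exact_mod_cast hx')) (by exact_mod_cast hx)
    have dB1 : Disjoint (↑B : Set V) (↑({z1} : Finset V) : Set V) := by
      rw [Set.disjoint_left]
      intro x hx hx'
      have : x = z1 := by simpa using hx'
      exact hZB x (this ▸ hz1Z) (by exact_mod_cast hx)
    have dB0 : Disjoint (↑B : Set V) (↑({z0} : Finset V) : Set V) := by
      rw [Set.disjoint_left]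
      intro x hx hx'
      have : x = z0 := by simpa using hx'
      exact hZB x (this ▸ hz0Z) (by exact_mod_cast hx)
    have dPf1 : Disjoint (↑Pf : Set V) (↑({z1} : Finset V) : Set V) := by
      rw [Set.disjoint_left]
      intro x hx hx'
      have : x = z1 := by simpa using hx'
      exact hz1Pf (this ▸ (by exact_mod_cast hx : x ∈ Pf))
    have dPf0 : Disjoint (↑Pf : Set V) (↑({z0} : Finset V) : Set V) := by
      rw [Set.disjoint_left]
      intro x hx hx'
      have : x = z0 := by simpa using hx'
      exact hz0Pf (this ▸ (by exact_mod_cast hx : x ∈ Pf))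
    have d10 : Disjoint (↑({z1} : Finset V) : Set V) (↑({z0} : Finset V) : Set V) := by
      rw [Set.disjoint_left]
      intro x hx hx'
      have h1 : x = z1 := by simpa using hx
      have h0 : x = z0 := by simpa using hx'
      exact hz0z1 (h0 ▸ h1 ▸ rfl)
    intro i j hij
    fin_cases i <;> fin_cases j <;>
      first
        | exact absurd rfl hij
        | exact dBPf | exact dB1 | exact dB0 | exact dPf1 | exact dPf0 | exact d10
        | exact dBPf.symm | exact dB1.symm | exact dB0.symm | exact dPf1.symm
        | exact dPf0.symm | exact d10.symm
  · intro i
    fin_cases i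
    · exact conn_induce hBconn hBne
    · exact conn_induce hPfconn hPfne
    · exact conn_induce (conn_singleton z1) ⟨z1, Finset.mem_singleton_self _⟩
    · exact conn_induce (conn_singleton z0) ⟨z0, Finset.mem_singleton_self _⟩
  · intro i j hij v hv
    fin_cases i <;> fin_cases j <;>
      first
        | exact absurd hij (by decide)
        | skip
    · -- (0,1)
      obtain ⟨u, huB, hadj⟩ := hdomPf v (by exact_mod_cast hv)
      exact ⟨u, by exact_mod_cast huB, hadj⟩
    · -- (0,2)
      have hv1 : v = z1 := by simpa using hv
      obtain ⟨u, huB, hadj⟩ := hdom z1 hz1Z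
      exact ⟨u, by exact_mod_cast huB, hv1 ▸ hadj⟩
    · -- (0,3)
      have hv0 : v = z0 := by simpa using hv
      obtain ⟨u, huB, hadj⟩ := hdom z0 hz0Z
      exact ⟨u, by exact_mod_cast huB, hv0 ▸ hadj⟩
    · -- (1,2)
      have hv1 : v = z1 := by simpa using hv
      exact ⟨y1, by exact_mod_cast hy1Pf, hv1 ▸ hadj1y1⟩
    · -- (1,3)
      have hv0 : v = z0 := by simpa using hv
      exact ⟨y, by exact_mod_cast hyPf, hv0 ▸ hadj0y⟩
    · -- (2,3)
      have hv0 : v = z0 := by simpa using hv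
      exact ⟨z1, by simp, hv0 ▸ hadj01⟩

end DomK4

/-- Every graph with no dominating K_4-model is 2-degenerate (every non-empty subgraph has a
vertex of degree at most 2 in that subgraph), and hence has chromatic number at most 3. -/
theorem degenerate_and_colourable_of_not_hasDomK4Model {V : Type*} [Fintype V]
    (G : SimpleGraph V) (h : ¬ G.HasDomKtModel 4) :
    (∀ s : Set V, s.Nonempty → ∃ v ∈ s, {u ∈ s | G.Adj v u}.ncard ≤ 2) ∧
      G.chromaticNumber ≤ 3 := by
  classical
  have hpart1 : ∀ s : Set V, s.Nonempty → ∃ v ∈ s, {u ∈ s | G.Adj v u}.ncard ≤ 2 := by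
    intro s hs
    by_contra hcon
    push_neg at hcon
    apply h
    apply DomK4.main_model (S₀ := s.toFinset)
    · exact Set.toFinset_nonempty.mpr hs
    · intro x hx
      have hxs : x ∈ s := by simpa using hx
      have h3 := hcon x hxs
      have heq : {u ∈ s | G.Adj x u}.toFinset = DomK4.nb G s.toFinset x := by
        ext u
        simp [DomK4.mem_nb]
      rw [Set.ncard_eq_toFinset_card', heq] at h3
      rw [DomK4.dg]
      omega
  refine ⟨hpart1, ?_⟩
  have hcol : G.Colorable 3 := DomK4.colorable_of_low hpart1
  exact_mod_cast hcol.chromaticNumber_le
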